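/- Let ϑₙ = π(1 − 2⁻ⁿ), ζₙ = e^{iϑₙ}, uₙ(z) = Re((ζₙ + z)/(ζₙ − z)), and let γ = (γₙ) ∈ ℓ¹ with γ ≠ 0, and u = Σₙ γₙ uₙ. Then u is not the Poisson integral of any integrable boundary function: there is no Lebesgue-integrable f : [0, 2π) → ℝ such that u(z) = (1/2π) ∫₀^{2π} ((1 − |z|²)/|e^{it} − z|²) f(t) dt for all z ∈ 𝔻. -/

import Mathlib

open Complex MeasureTheory Filter Set

noncomputable section

/-- `ϑₙ = π(1 - 2⁻⁽ⁿ⁺¹⁾)` (indexing from `n = 0`, so this is the paper's `ϑ_{n+1}`). -/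
def theta (n : ℕ) : ℝ := Real.pi * (1 - (1 / 2 : ℝ) ^ (n + 1))

def zeta (n : ℕ) : ℂ := Complex.exp (theta n * Complex.I)

def uP (n : ℕ) (z : ℂ) : ℝ := ((zeta n + z) / (zeta n - z)).re

/-- The Poisson kernel of the unit disk with pole `e^{it}`. -/
def poissonKernelDisk (t : ℝ) (z : ℂ) : ℝ :=
  (1 - ‖z‖ ^ 2) / ‖Complex.exp (t * Complex.I) - z‖ ^ 2

lemma theta_pos (n : ℕ) : 0 < theta n := by
  have h : (1/2:ℝ)^(n+1) < 1 := pow_lt_one₀ (by norm_num) (by norm_num) (Nat.succ_ne_zero n)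
  have := Real.pi_pos
  unfold theta; nlinarith

lemma theta_lt_pi (n : ℕ) : theta n < Real.pi := by
  have h : (0:ℝ) < (1/2:ℝ)^(n+1) := by positivity
  have := Real.pi_pos
  unfold theta; nlinarith

lemma abs_zeta (n : ℕ) : ‖zeta n‖ = 1 := by
  rw [zeta, Complex.norm_exp]
  simp

lemma normSq_zeta (n : ℕ) : Complex.normSq (zeta n) = 1 := by
  rw [← Complex.sq_norm, abs_zeta]; norm_num

lemma theta_strictMono : StrictMono theta := by
  intro m n hmn
  have h : (1/2:ℝ)^(n+1) < (1/2:ℝ)^(m+1) :=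
    pow_lt_pow_right_of_lt_one₀ (by norm_num) (by norm_num) (by omega)
  have := Real.pi_pos
  unfold theta; nlinarith

lemma zeta_injective : Function.Injective zeta := by
  intro m n h
  rw [zeta, zeta, Complex.exp_eq_exp_iff_exists_int] at h
  obtain ⟨k, hk⟩ := h
  have hk2 : ((theta m : ℂ)) * Complex.I = ((theta n + k * (2*Real.pi) : ℝ) : ℂ) * Complex.I := by
    rw [hk]; push_cast; ring
  have hk3 : theta m = theta n + k * (2*Real.pi) := by
    have := mul_right_cancel₀ Complex.I_ne_zero hk2
    exact_mod_cast this
  have h1 := theta_pos m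
  have h2 := theta_pos n
  have h3 := theta_lt_pi m
  have h4 := theta_lt_pi n
  have hpi := Real.pi_pos
  have hk0 : k = 0 := by
    rcases lt_trichotomy k 0 with h | h | h
    · have : (k:ℝ) ≤ -1 := by exact_mod_cast Int.le_of_lt_add_one (by simpa using h)
      nlinarith
    · exact h
    · have : (1:ℝ) ≤ (k:ℝ) := by exact_mod_cast h
      nlinarith
  rw [hk0] at hk3
  simp at hk3
  exact theta_strictMono.injective hk3

lemma uP_eq (n : ℕ) (z : ℂ) :
    uP n z = (1 - ‖z‖ ^ 2) / ‖zeta n - z‖ ^ 2 := by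
  rw [uP, Complex.div_re, ← add_div, Complex.sq_norm, Complex.sq_norm]
  congr 1
  have h1 := normSq_zeta n
  simp only [Complex.normSq_apply, Complex.add_re, Complex.sub_re, Complex.add_im,
    Complex.sub_im] at h1 ⊢
  linear_combination h1


lemma kernel_bound {w z : ℂ} (hw : ‖w‖ = 1) {r : ℝ} (hr0 : 0 ≤ r) (hr1 : r < 1)
    (hz : ‖z‖ = r) :
    0 ≤ (1 - ‖z‖ ^ 2) / ‖w - z‖ ^ 2 ∧
      (1 - r) * ((1 - ‖z‖ ^ 2) / ‖w - z‖ ^ 2) ≤ 2 := by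
  have hlow : 1 - r ≤ ‖w - z‖ := by
    have := norm_sub_norm_le w z
    simpa [hw, hz] using this
  have hpos : 0 < ‖w - z‖ := lt_of_lt_of_le (by linarith) hlow
  have hnum : 0 ≤ 1 - ‖z‖ ^ 2 := by rw [hz]; nlinarith
  have hD : (0:ℝ) < ‖w - z‖ ^ 2 := by positivity
  have h2 : (1 - r) ^ 2 ≤ ‖w - z‖ ^ 2 := by nlinarith
  refine ⟨by positivity, ?_⟩
  rw [mul_div_assoc', div_le_iff₀ hD]
  rw [hz]
  nlinarith [mul_nonneg (sub_nonneg.2 h2) (by linarith : (0:ℝ) ≤ 1 + r),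
    mul_nonneg hD.le (by linarith : (0:ℝ) ≤ 1 - r)]

lemma uP_bound (m n : ℕ) {r : ℝ} (hr0 : 0 ≤ r) (hr1 : r < 1) :
    0 ≤ uP m ((r : ℂ) * zeta n) ∧ (1 - r) * uP m ((r : ℂ) * zeta n) ≤ 2 := by
  have hz : ‖(r : ℂ) * zeta n‖ = r := by
    rw [norm_mul, abs_zeta, Complex.norm_real, Real.norm_eq_abs, mul_one, _root_.abs_of_nonneg hr0]
  have := kernel_bound (abs_zeta m) hr0 hr1 hz
  rw [uP_eq]
  exact this

lemma poissonKernel_bound (t : ℝ) (n : ℕ) {r : ℝ} (hr0 : 0 ≤ r) (hr1 : r < 1) :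
    0 ≤ poissonKernelDisk t ((r : ℂ) * zeta n) ∧
      (1 - r) * poissonKernelDisk t ((r : ℂ) * zeta n) ≤ 2 := by
  have hz : ‖(r : ℂ) * zeta n‖ = r := by
    rw [norm_mul, abs_zeta, Complex.norm_real, Real.norm_eq_abs, mul_one, _root_.abs_of_nonneg hr0]
  have hw : ‖Complex.exp (t * Complex.I)‖ = 1 := by
    rw [Complex.norm_exp]; simp
  exact kernel_bound hw hr0 hr1 hz

lemma lim_diag (n : ℕ) :
    Tendsto (fun r : ℝ => (1 - r) * uP n ((r : ℂ) * zeta n)) (nhdsWithin 1 (Set.Iio 1))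
      (nhds 2) := by
  have hev : ∀ᶠ r : ℝ in nhdsWithin 1 (Set.Iio 1),
      (1 - r) * uP n ((r : ℂ) * zeta n) = 1 + r := by
    filter_upwards [Ioo_mem_nhdsLT_of_mem (by norm_num : (1:ℝ) ∈ Set.Ioc 0 1)] with r hr
    have hr0 : 0 < r := hr.1
    have hr1 : r < 1 := hr.2
    have hz : ‖(r : ℂ) * zeta n‖ = r := by
      rw [norm_mul, abs_zeta, Complex.norm_real, Real.norm_eq_abs, mul_one, _root_.abs_of_nonneg hr0.le]
    have hden : ‖zeta n - (r : ℂ) * zeta n‖ = 1 - r := by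
      have : zeta n - (r : ℂ) * zeta n = ((1 - r : ℝ) : ℂ) * zeta n := by push_cast; ring
      rw [this, norm_mul, abs_zeta, Complex.norm_real, Real.norm_eq_abs, mul_one, _root_.abs_of_nonneg (by linarith)]
    rw [uP_eq, hz, hden]
    have hne : (1:ℝ) - r ≠ 0 := by linarith
    field_simp
    ring
  have : Tendsto (fun r : ℝ => 1 + r) (nhdsWithin 1 (Set.Iio 1)) (nhds 2) := by
    have h : ContinuousAt (fun r : ℝ => 1 + r) 1 := by fun_prop
    have h2 := h.tendsto.mono_left (nhdsWithin_le_nhds (s := Set.Iio 1))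
    norm_num at h2
    exact h2
  exact Tendsto.congr' (Filter.EventuallyEq.symm hev) this

lemma lim_off {m n : ℕ} (hmn : m ≠ n) :
    Tendsto (fun r : ℝ => (1 - r) * uP m ((r : ℂ) * zeta n)) (nhdsWithin 1 (Set.Iio 1))
      (nhds 0) := by
  have hne : zeta m - zeta n ≠ 0 := sub_ne_zero.2 fun h => hmn (zeta_injective h)
  have hca : ContinuousAt (fun r : ℝ => (1 - r) * uP m ((r : ℂ) * zeta n)) 1 := by
    apply ContinuousAt.mul
    · fun_prop
    · apply Complex.continuous_re.continuousAt.comp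
      apply ContinuousAt.div
      · fun_prop
      · fun_prop
      · simpa using hne
  have := hca.tendsto.mono_left (nhdsWithin_le_nhds (s := Set.Iio 1))
  simpa using this


lemma exp_I_inj {s t : ℝ} (hs : s ∈ Set.Ico 0 (2*Real.pi)) (ht : t ∈ Set.Ico 0 (2*Real.pi))
    (h : Complex.exp (s*Complex.I) = Complex.exp (t*Complex.I)) : s = t := by
  rw [Complex.exp_eq_exp_iff_exists_int] at h
  obtain ⟨k, hk⟩ := h
  have hk2 : ((s : ℂ)) * Complex.I = ((t + k * (2*Real.pi) : ℝ) : ℂ) * Complex.I := by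
    rw [hk]; push_cast; ring
  have hk3 : s = t + k * (2*Real.pi) := by
    have := mul_right_cancel₀ Complex.I_ne_zero hk2
    exact_mod_cast this
  have hpi := Real.pi_pos
  have hk0 : k = 0 := by
    rcases lt_trichotomy k 0 with h | h | h
    · have : (k:ℝ) ≤ -1 := by exact_mod_cast Int.le_of_lt_add_one (by simpa using h)
      nlinarith [hs.1, hs.2, ht.1, ht.2]
    · exact h
    · have : (1:ℝ) ≤ (k:ℝ) := by exact_mod_cast h
      nlinarith [hs.1, hs.2, ht.1, ht.2]
  rw [hk0] at hk3
  simpa using hk3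

lemma theta_mem_Ico (n : ℕ) : theta n ∈ Set.Ico 0 (2*Real.pi) := by
  have := theta_pos n
  have := theta_lt_pi n
  have := Real.pi_pos
  constructor <;> [linarith; linarith]

lemma tendsto_sum_side (γ : ℕ → ℝ) (hγ : Summable fun m => |γ m|) (n : ℕ) :
    Tendsto (fun r : ℝ => (1 - r) * ∑' m : ℕ, γ m * uP m ((r : ℂ) * zeta n))
      (nhdsWithin 1 (Set.Iio 1)) (nhds (2 * γ n)) := by
  have hlim : ∀ m : ℕ, Tendsto (fun r : ℝ => (1 - r) * (γ m * uP m ((r : ℂ) * zeta n)))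
      (nhdsWithin 1 (Set.Iio 1)) (nhds (if m = n then 2 * γ n else 0)) := by
    intro m
    by_cases hmn : m = n
    · subst hmn
      simp only [if_pos rfl]
      have h2 : Tendsto (fun r : ℝ => (1 - r) * (γ m * uP m ((r : ℂ) * zeta m)))
          (nhdsWithin 1 (Set.Iio 1)) (nhds (γ m * 2)) :=
        ((lim_diag m).const_mul (γ m)).congr (fun r => by ring)
      rw [mul_comm (2:ℝ) (γ m)]
      exact h2
    · simp only [if_neg hmn]
      have h2 : Tendsto (fun r : ℝ => (1 - r) * (γ m * uP m ((r : ℂ) * zeta n)))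
          (nhdsWithin 1 (Set.Iio 1)) (nhds (γ m * 0)) :=
        ((lim_off hmn).const_mul (γ m)).congr (fun r => by ring)
      simpa using h2
  have hbound : ∀ᶠ r : ℝ in nhdsWithin 1 (Set.Iio 1),
      ∀ m : ℕ, ‖(1 - r) * (γ m * uP m ((r : ℂ) * zeta n))‖ ≤ 2 * |γ m| := by
    filter_upwards [Ioo_mem_nhdsLT_of_mem (by norm_num : (1:ℝ) ∈ Set.Ioc 0 1)] with r hr m
    obtain ⟨hr0, hr1⟩ := hr
    obtain ⟨h1, h2⟩ := uP_bound m n hr0.le hr1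
    have he : ‖(1 - r) * (γ m * uP m ((r : ℂ) * zeta n))‖
        = |γ m| * ((1 - r) * uP m ((r : ℂ) * zeta n)) := by
      rw [Real.norm_eq_abs, abs_mul, abs_mul, _root_.abs_of_nonneg (by linarith : (0:ℝ) ≤ 1 - r),
        _root_.abs_of_nonneg h1]
      ring
    rw [he]
    calc |γ m| * ((1 - r) * uP m ((r : ℂ) * zeta n)) ≤ |γ m| * 2 :=
          mul_le_mul_of_nonneg_left h2 (abs_nonneg _)
      _ = 2 * |γ m| := by ring
  have := tendsto_tsum_of_dominated_convergence (hγ.mul_left 2) hlim hbound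
  rw [tsum_ite_eq n (fun _ => 2 * γ n)] at this
  refine Tendsto.congr (fun r => ?_) this
  rw [← tsum_mul_left]

lemma lim_kernel (n : ℕ) {t : ℝ} (hne : Complex.exp (t * Complex.I) ≠ zeta n) (c : ℝ) :
    Tendsto (fun r : ℝ => (1 - r) * (poissonKernelDisk t ((r : ℂ) * zeta n) * c))
      (nhdsWithin 1 (Set.Iio 1)) (nhds 0) := by
  have hca : ContinuousAt (fun r : ℝ => (1 - r) * (poissonKernelDisk t ((r : ℂ) * zeta n) * c)) 1 := by
    unfold poissonKernelDisk
    have habs : Continuous fun r : ℝ => ‖(r : ℂ) * zeta n‖ :=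
      continuous_norm.comp (Complex.continuous_ofReal.mul continuous_const)
    have hden : Continuous fun r : ℝ =>
        ‖Complex.exp (t * Complex.I) - (r : ℂ) * zeta n‖ ^ 2 :=
      (continuous_norm.comp
        (continuous_const.sub (Complex.continuous_ofReal.mul continuous_const))).pow 2
    apply ContinuousAt.mul (by fun_prop)
    apply ContinuousAt.mul ?_ continuousAt_const
    apply ContinuousAt.div ((continuous_const.sub (habs.pow 2)).continuousAt)
      hden.continuousAt
    have hz : Complex.exp (t * Complex.I) - ((1:ℝ):ℂ) * zeta n ≠ 0 := by
      simpa [sub_ne_zero] using hne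
    exact pow_ne_zero 2 (norm_ne_zero_iff.mpr hz)
  have h2 := hca.tendsto.mono_left (nhdsWithin_le_nhds (s := Set.Iio 1))
  simpa using h2

lemma tendsto_int_side (n : ℕ) (f : ℝ → ℝ)
    (hf : IntegrableOn f (Set.Ico (0 : ℝ) (2 * Real.pi)) volume) :
    Tendsto (fun r : ℝ => ∫ t in Set.Ico (0:ℝ) (2*Real.pi),
        (1 - r) * (poissonKernelDisk t ((r : ℂ) * zeta n) * f t))
      (nhdsWithin 1 (Set.Iio 1)) (nhds 0) := by
  have hmeas : ∀ᶠ r : ℝ in nhdsWithin 1 (Set.Iio 1),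
      AEStronglyMeasurable (fun t => (1 - r) * (poissonKernelDisk t ((r : ℂ) * zeta n) * f t))
        (volume.restrict (Set.Ico (0:ℝ) (2*Real.pi))) := by
    apply Filter.Eventually.of_forall
    intro r
    have hker : Measurable fun t : ℝ => poissonKernelDisk t ((r : ℂ) * zeta n) := by
      unfold poissonKernelDisk
      apply Measurable.div measurable_const
      apply Measurable.pow ?_ measurable_const
      apply continuous_norm.measurable.comp
      apply Measurable.sub ?_ measurable_const
      exact (Complex.continuous_exp.comp
        (Complex.continuous_ofReal.mul continuous_const)).measurable
    exact ((hker.aestronglyMeasurable.mul hf.1).const_mul _)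
  have hbound : ∀ᶠ r : ℝ in nhdsWithin 1 (Set.Iio 1),
      ∀ᵐ t ∂(volume.restrict (Set.Ico (0:ℝ) (2*Real.pi))),
        ‖(1 - r) * (poissonKernelDisk t ((r : ℂ) * zeta n) * f t)‖ ≤ 2 * |f t| := by
    filter_upwards [Ioo_mem_nhdsLT_of_mem (by norm_num : (1:ℝ) ∈ Set.Ioc 0 1)] with r hr
    obtain ⟨hr0, hr1⟩ := hr
    apply ae_of_all
    intro t
    obtain ⟨h1, h2⟩ := poissonKernel_bound t n hr0.le hr1
    have he : ‖(1 - r) * (poissonKernelDisk t ((r : ℂ) * zeta n) * f t)‖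
        = ((1 - r) * poissonKernelDisk t ((r : ℂ) * zeta n)) * |f t| := by
      rw [Real.norm_eq_abs, abs_mul, abs_mul, _root_.abs_of_nonneg (by linarith : (0:ℝ) ≤ 1 - r),
        _root_.abs_of_nonneg h1]
      ring
    rw [he]
    exact mul_le_mul_of_nonneg_right h2 (abs_nonneg _)
  have hint : Integrable (fun t => 2 * |f t|)
      (volume.restrict (Set.Ico (0:ℝ) (2*Real.pi))) := hf.abs.const_mul 2
  have hlim : ∀ᵐ t ∂(volume.restrict (Set.Ico (0:ℝ) (2*Real.pi))),
      Tendsto (fun r : ℝ => (1 - r) * (poissonKernelDisk t ((r : ℂ) * zeta n) * f t))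
        (nhdsWithin 1 (Set.Iio 1)) (nhds 0) := by
    have h1 : ∀ᵐ t ∂(volume.restrict (Set.Ico (0:ℝ) (2*Real.pi))),
        t ∈ Set.Ico (0:ℝ) (2*Real.pi) := ae_restrict_mem measurableSet_Ico
    have h2 : ∀ᵐ t ∂(volume.restrict (Set.Ico (0:ℝ) (2*Real.pi))), t ≠ theta n := by
      apply ae_restrict_of_ae
      rw [ae_iff]
      have hset : {a : ℝ | ¬ a ≠ theta n} = {theta n} := by ext a; simp
      rw [hset]
      exact measure_singleton _
    filter_upwards [h1, h2] with t ht hnet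
    apply lim_kernel
    intro hexp
    exact hnet (exp_I_inj ht (theta_mem_Ico n) (by rw [hexp]; rfl))
  have := tendsto_integral_filter_of_dominated_convergence (fun t => 2 * |f t|)
    hmeas hbound hint hlim
  simpa using this

/-- For `γ ∈ ℓ¹`, `γ ≠ 0`, the function `u = Σ γₙ uₙ` is not the Poisson integral of any
integrable boundary function `f ∈ L¹[0, 2π)`. -/
theorem sum_not_poisson_integral (γ : ℕ → ℝ) (hγ : Summable fun n : ℕ => |γ n|)
    (hγ0 : γ ≠ 0) (u : ℂ → ℝ) (hu : u = fun z : ℂ => ∑' n : ℕ, γ n * uP n z) :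
    ¬ ∃ f : ℝ → ℝ, IntegrableOn f (Set.Ico (0 : ℝ) (2 * Real.pi)) volume ∧
      ∀ z : ℂ, ‖z‖ < 1 →
        u z = (1 / (2 * Real.pi)) *
          ∫ t in Set.Ico (0 : ℝ) (2 * Real.pi), poissonKernelDisk t z * f t := by
  rintro ⟨f, hf, hrep⟩
  apply hγ0
  funext n
  show γ n = 0
  have hA : Tendsto (fun r : ℝ => (1 - r) * u ((r : ℂ) * zeta n))
      (nhdsWithin 1 (Set.Iio 1)) (nhds (2 * γ n)) := by
    rw [hu]; exact tendsto_sum_side γ hγ n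
  have hB : Tendsto (fun r : ℝ => (1 - r) * u ((r : ℂ) * zeta n))
      (nhdsWithin 1 (Set.Iio 1)) (nhds 0) := by
    have key := (tendsto_int_side n f hf).const_mul (1 / (2*Real.pi))
    rw [mul_zero] at key
    refine Tendsto.congr' ?_ key
    filter_upwards [Ioo_mem_nhdsLT_of_mem (by norm_num : (1:ℝ) ∈ Set.Ioc 0 1)] with r hr
    have habs : ‖(r : ℂ) * zeta n‖ < 1 := by
      rw [norm_mul, abs_zeta, Complex.norm_real, Real.norm_eq_abs, mul_one, _root_.abs_of_nonneg hr.1.le]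
      exact hr.2
    rw [hrep _ habs]
    rw [MeasureTheory.integral_const_mul]
    ring
  have h := tendsto_nhds_unique hA hB
  linarith

end
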